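/- Let X and Y be racks and π : X → Y a surjective rack homomorphism (π(x ◃ y) = π(x) ◃ π(y) for all x, y ∈ X). Then there exists a surjective group homomorphism F : Inn X → Inn Y such that F(φ_x) = φ_{π(x)} for every x ∈ X. -/

import Mathlib

open Quandles

/-- The inner group of a rack `X`: the subgroup of the permutation group of `X`
generated by the left translations `φ_x = x ◃ -`. -/
def Rack.innerGroup (X : Type*) [Rack X] : Subgroup (Equiv.Perm X) :=
  Subgroup.closure (Set.range fun x : X => Rack.act' x)

/-- A surjective rack homomorphism `π : X → Y` extends to a surjective group
homomorphism `F : Inn X → Inn Y` with `F(φ_x) = φ_{π(x)}` for every `x ∈ X`. -/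
theorem innerGroup_map_of_surjective_rack_hom
    {X Y : Type*} [Rack X] [Rack Y] (π : X → Y)
    (hsurj : Function.Surjective π)
    (hhom : ∀ x y : X, π (x ◃ y) = π x ◃ π y) :
    ∃ F : Rack.innerGroup X →* Rack.innerGroup Y,
      Function.Surjective F ∧
      ∀ x : X,
        (F ⟨Rack.act' x, Subgroup.subset_closure (Set.mem_range_self x)⟩ : Equiv.Perm Y)
          = Rack.act' (π x) := by
  classical
  -- The compatibility subgroup
  set K : Subgroup (Equiv.Perm X × Equiv.Perm Y) :=
    { carrier := {p | p.2 ∈ Rack.innerGroup Y ∧ ∀ x, π (p.1 x) = p.2 (π x)}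
      one_mem' := ⟨Subgroup.one_mem _, fun x => rfl⟩
      mul_mem' := by
        rintro p q ⟨hp1, hp2⟩ ⟨hq1, hq2⟩
        refine ⟨Subgroup.mul_mem _ hp1 hq1, fun x => ?_⟩
        simp only [Prod.fst_mul, Prod.snd_mul, Equiv.Perm.mul_apply]
        rw [hp2, hq2]
      inv_mem' := by
        rintro p ⟨hp1, hp2⟩
        refine ⟨Subgroup.inv_mem _ hp1, fun x => ?_⟩
        have := hp2 (p.1⁻¹ x)
        simp only [Prod.fst_inv, Prod.snd_inv] at *
        rw [show p.1 (p.1⁻¹ x) = x from p.1.apply_symm_apply x] at this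
        rw [this, show p.2⁻¹ (p.2 (π (p.1⁻¹ x))) = π (p.1⁻¹ x) from p.2.symm_apply_apply _] } with hK
  have huniq : ∀ p q : Equiv.Perm X × Equiv.Perm Y, p ∈ K → q ∈ K → p.1 = q.1 → p.2 = q.2 := by
    rintro p q ⟨-, hp⟩ ⟨-, hq⟩ h
    ext y
    obtain ⟨x, rfl⟩ := hsurj y
    rw [← hp, ← hq, h]
  set H : Subgroup (Equiv.Perm X × Equiv.Perm Y) :=
    Subgroup.closure (Set.range fun x : X => (Rack.act' x, Rack.act' (π x))) with hH
  have hgen : ∀ x : X, (Rack.act' x, Rack.act' (π x)) ∈ H := fun x =>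
    Subgroup.subset_closure (Set.mem_range_self x)
  have hHK : H ≤ K := by
    rw [hH, Subgroup.closure_le]
    rintro - ⟨x, rfl⟩
    refine ⟨Subgroup.subset_closure (Set.mem_range_self (π x)), fun z => ?_⟩
    simp only [Rack.act'_apply]
    exact hhom x z
  have hfst : H.map (MonoidHom.fst _ _) = Rack.innerGroup X := by
    rw [hH, MonoidHom.map_closure, Rack.innerGroup]
    congr 1
    ext p
    simp [Set.range_comp]
  have hsnd : H.map (MonoidHom.snd _ _) = Rack.innerGroup Y := by
    rw [hH, MonoidHom.map_closure, Rack.innerGroup]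
    congr 1
    ext p
    constructor
    · rintro ⟨-, ⟨x, rfl⟩, rfl⟩; exact ⟨π x, rfl⟩
    · rintro ⟨y, rfl⟩
      obtain ⟨x, rfl⟩ := hsurj y
      exact ⟨_, ⟨x, rfl⟩, rfl⟩
  -- choose pair for each g
  have hex : ∀ g : Rack.innerGroup X, ∃ p : Equiv.Perm X × Equiv.Perm Y, p ∈ H ∧ p.1 = g := by
    rintro ⟨g, hg⟩
    rw [← hfst] at hg
    obtain ⟨p, hp, hp1⟩ := hg
    exact ⟨p, hp, hp1⟩
  choose p hpH hp1 using hex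
  refine ⟨{ toFun := fun g => ⟨(p g).2, (hHK (hpH g)).1⟩
            map_one' := ?_
            map_mul' := ?_ }, ?_, ?_⟩
  · ext1
    exact huniq (p 1) 1 (hHK (hpH 1)) K.one_mem (hp1 1)
  · intro a b
    ext1
    refine huniq (p (a * b)) (p a * p b) (hHK (hpH _)) (K.mul_mem (hHK (hpH a)) (hHK (hpH b))) ?_
    simp [hp1]
  · rintro ⟨h, hh⟩
    rw [← hsnd] at hh
    obtain ⟨q, hq, hq2⟩ := hh
    have hq1 : q.1 ∈ Rack.innerGroup X := hfst ▸ ⟨q, hq, rfl⟩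
    refine ⟨⟨q.1, hq1⟩, ?_⟩
    ext1
    simp only
    rw [← hq2]
    exact huniq _ q (hHK (hpH _)) (hHK hq) (hp1 _)
  · intro x
    exact huniq _ (Rack.act' x, Rack.act' (π x)) (hHK (hpH _)) (hHK (hgen x)) (hp1 _)
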